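/- Let A be a (2a)×(2a) rational matrix and N a (2n)×(2n) rational matrix. Suppose that N is rationally null-cobordant, that the block sum A ⊞ N is rationally null-cobordant, and that there exist λ, μ ∈ ℚ such that det(λN + μNᵀ) ≠ 0. Then A is rationally null-cobordant. -/

import Mathlib

open Matrix

open Submodule Module

set_option linter.unusedSectionVars false
set_option maxHeartbeats 1000000

/-- A square matrix over a commutative ring is *null-cobordant* if its size is even,
say `n = 2 * r`, and it is congruent, via a matrix `P` with unit determinant, to a
block matrix whose upper-left `r × r` block is zero. -/
def Matrix.IsNullCobordant {R : Type*} [CommRing R] {n : ℕ}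
    (A : Matrix (Fin n) (Fin n) R) : Prop :=
  ∃ r : ℕ, n = 2 * r ∧ ∃ P : Matrix (Fin n) (Fin n) R, IsUnit P.det ∧
    ∀ i j : Fin n, (i : ℕ) < r → (j : ℕ) < r → (Pᵀ * A * P) i j = 0

lemma congr_entry {m : ℕ} (A P : Matrix (Fin m) (Fin m) ℚ) (i j : Fin m) :
    (Pᵀ * A * P) i j = (fun k => P k i) ⬝ᵥ A *ᵥ (fun k => P k j) := by
  simp only [Matrix.mul_apply, Matrix.transpose_apply, Matrix.mulVec, dotProduct,
    Finset.sum_mul, Finset.mul_sum]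
  rw [Finset.sum_comm]
  apply Finset.sum_congr rfl; intro k _
  apply Finset.sum_congr rfl; intro l _
  ring

lemma sumExtend_apply_inl {K V ι : Type*} [DivisionRing K] [AddCommGroup V] [Module K V]
    {v : ι → V} (hs : LinearIndependent K v) (i : ι) :
    Basis.sumExtend hs (Sum.inl i) = v i := by
  classical
  simp only [Basis.sumExtend, Basis.reindex_apply, Equiv.symm_symm, Trans.trans,
    Equiv.trans_apply]
  rw [Basis.extend_apply_self]
  rfl

lemma subspace_to_nc {m r : ℕ} (M : Matrix (Fin m) (Fin m) ℚ) (hm : m = 2 * r)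
    (L : Submodule ℚ (Fin m → ℚ)) (hr : r ≤ finrank ℚ L)
    (hiso : ∀ x ∈ L, ∀ y ∈ L, x ⬝ᵥ M *ᵥ y = 0) : M.IsNullCobordant := by
  classical
  have hfr : finrank ℚ (Fin m → ℚ) = m := by simp
  have hrm : r ≤ m := by
    have := Submodule.finrank_le L
    omega
  -- a linearly independent family of size r inside L
  let bL := finBasis ℚ L
  have hrL : r ≤ finrank ℚ L := hr
  let w : Fin r → (Fin m → ℚ) := fun i => (bL (Fin.castLE hrL i) : Fin m → ℚ)
  have hw : LinearIndependent ℚ w := by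
    have h1 : LinearIndependent ℚ (fun i => (bL i : Fin m → ℚ)) :=
      bL.linearIndependent.map' L.subtype L.ker_subtype
    exact h1.comp _ (Fin.castLE_injective hrL)
  have hwL : ∀ i, w i ∈ L := fun i => SetLike.coe_mem _
  -- extend to a basis
  let b := Basis.sumExtend hw
  haveI : Fintype (Basis.sumExtendIndex hw) := by
    letI := FiniteDimensional.fintypeBasisIndex b
    exact Fintype.ofInjective
      (Sum.inr : _ → Fin r ⊕ (Basis.sumExtendIndex hw : Set (Fin m → ℚ))) Sum.inr_injective
  have hcard : r + Fintype.card (Basis.sumExtendIndex hw) = m := by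
    have h2 := Module.finrank_eq_card_basis b
    rw [hfr, Fintype.card_sum, Fintype.card_fin] at h2
    omega
  have hcard2 : Fintype.card (Fin (m - r)) = Fintype.card (Basis.sumExtendIndex hw) := by
    rw [Fintype.card_fin]; omega
  let g : Fin m ≃ (Fin r ⊕ Basis.sumExtendIndex hw) :=
    (finCongr (by omega : m = r + (m - r))).trans <| finSumFinEquiv.symm.trans <|
      Equiv.sumCongr (Equiv.refl _) (Fintype.equivOfCardEq hcard2)
  have hg : ∀ (i : Fin m) (hi : (i : ℕ) < r), g i = Sum.inl ⟨(i : ℕ), hi⟩ := by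
    intro i hi
    have h4 : finSumFinEquiv.symm (Fin.cast (by omega : m = r + (m - r)) i)
        = Sum.inl (⟨(i : ℕ), hi⟩ : Fin r) := by
      rw [Equiv.symm_apply_eq]
      ext
      simp
    simp [g, Equiv.trans_apply, finCongr_apply, h4]
  let c : Basis (Fin m) ℚ (Fin m → ℚ) := b.reindex g.symm
  have hc : ∀ i : Fin m, c i = b (g i) := by intro i; simp [c]
  let P : Matrix (Fin m) (Fin m) ℚ := fun i j => c j i
  have hPdet : IsUnit P.det := by
    have hPm : P = (Pi.basisFun ℚ (Fin m)).toMatrix ⇑c := by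
      ext i j
      rw [Basis.toMatrix_apply, Pi.basisFun_repr]
    have := Basis.toMatrix_mul_toMatrix_flip (Pi.basisFun ℚ (Fin m)) c
    have hdet : P.det * (c.toMatrix (Pi.basisFun ℚ (Fin m))).det = 1 := by
      rw [← Matrix.det_mul, hPm, this, Matrix.det_one]
    exact IsUnit.of_mul_eq_one _ hdet
  refine ⟨r, hm, P, hPdet, ?_⟩
  intro i j hi hj
  rw [congr_entry]
  have hci : (fun k => P k i) = c i := rfl
  have hcj : (fun k => P k j) = c j := rfl
  rw [hci, hcj]
  have hmem : ∀ (i : Fin m) (hi : (i : ℕ) < r), (c i : Fin m → ℚ) ∈ L := by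
    intro i hi
    rw [hc, hg i hi, sumExtend_apply_inl]
    exact hwL _
  exact hiso _ (hmem i hi) _ (hmem j hj)


lemma isotropic_span {ι : Type*} [Fintype ι] (M : Matrix ι ι ℚ) (s : Set (ι → ℚ))
    (h : ∀ x ∈ s, ∀ y ∈ s, x ⬝ᵥ M *ᵥ y = 0) :
    ∀ x ∈ span ℚ s, ∀ y ∈ span ℚ s, x ⬝ᵥ M *ᵥ y = 0 := by
  intro x hx y hy
  refine Submodule.span_induction₂ (p := fun x y _ _ => x ⬝ᵥ M *ᵥ y = 0)
    (fun x y hx hy => h x hx y hy) ?_ ?_ ?_ ?_ ?_ ?_ hx hy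
  · intro y _; simp
  · intro x _; simp
  · intro x y z _ _ _ h1 h2; simp [add_dotProduct, h1, h2]
  · intro x y z _ _ _ h1 h2; simp [mulVec_add, dotProduct_add, h1, h2]
  · intro r x y _ _ h1; simp [smul_dotProduct, h1]
  · intro r x y _ _ h1; simp [mulVec_smul, dotProduct_smul, h1]

/-- A square matrix over a commutative ring is *null-cobordant* ... -/


lemma nc_to_subspace {m r : ℕ} (M : Matrix (Fin m) (Fin m) ℚ) (h : M.IsNullCobordant)
    (hm : m = 2 * r) :
    ∃ L : Submodule ℚ (Fin m → ℚ), r ≤ finrank ℚ L ∧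
      ∀ x ∈ L, ∀ y ∈ L, x ⬝ᵥ M *ᵥ y = 0 := by
  obtain ⟨r', hm', P, hP, h0⟩ := h
  have hr : r' = r := by omega
  have hrm : r' ≤ m := by omega
  have hli : LinearIndependent ℚ (fun i => Pᵀ i) :=
    Matrix.linearIndependent_cols_iff_isUnit.2 ((Matrix.isUnit_iff_isUnit_det P).2 hP)
  set v : Fin r' → (Fin m → ℚ) := fun i => Pᵀ (Fin.castLE hrm i) with hv
  have hliv : LinearIndependent ℚ v := hli.comp _ (Fin.castLE_injective hrm)
  refine ⟨span ℚ (Set.range v), ?_, ?_⟩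
  · rw [finrank_span_eq_card hliv]; simp [hr]
  · apply isotropic_span
    rintro x ⟨i, rfl⟩ y ⟨j, rfl⟩
    have := h0 (Fin.castLE hrm i) (Fin.castLE hrm j) i.2 j.2
    rwa [congr_entry] at this


namespace NCproof

/-- extension by zero on the left summand -/
def extL {α β : Type*} : (α → ℚ) →ₗ[ℚ] (α ⊕ β → ℚ) where
  toFun x := Sum.elim x 0
  map_add' x y := by funext i; cases i <;> simp
  map_smul' c x := by funext i; cases i <;> simp

def extR {α β : Type*} : (β → ℚ) →ₗ[ℚ] (α ⊕ β → ℚ) where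
  toFun x := Sum.elim 0 x
  map_add' x y := by funext i; cases i <;> simp
  map_smul' c x := by funext i; cases i <;> simp

def prL {α β : Type*} : (α ⊕ β → ℚ) →ₗ[ℚ] (α → ℚ) where
  toFun x := x ∘ Sum.inl
  map_add' _ _ := rfl
  map_smul' _ _ := rfl

lemma extL_apply {α β : Type*} (x : α → ℚ) : (extL (β := β)) x = Sum.elim x (0 : β → ℚ) := rfl
lemma extR_apply {α β : Type*} (x : β → ℚ) : (extR (α := α)) x = Sum.elim (0 : α → ℚ) x := rfl
lemma prL_apply {α β : Type*} (x : α ⊕ β → ℚ) : prL x = x ∘ Sum.inl := rfl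

lemma extL_inj {α β : Type*} : Function.Injective (extL (α := α) (β := β)) := by
  intro x y h; funext i; exact congrFun h (Sum.inl i)

lemma extR_inj {α β : Type*} : Function.Injective (extR (α := α) (β := β)) := by
  intro x y h; funext i; exact congrFun h (Sum.inr i)

/-- dot product with a right-extended vector -/
lemma dot_extR {α β : Type*} [Fintype α] [Fintype β] (g : β → ℚ) (x : α ⊕ β → ℚ) :
    (extR (α := α) g) ⬝ᵥ x = g ⬝ᵥ (x ∘ Sum.inr) := by
  simp [extR_apply, dotProduct, Fintype.sum_sum_type]

lemma pair_fromBlocks {p q : ℕ} (A : Matrix (Fin p) (Fin p) ℚ) (N : Matrix (Fin q) (Fin q) ℚ)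
    (x y : Fin p ⊕ Fin q → ℚ) :
    x ⬝ᵥ (fromBlocks A 0 0 N) *ᵥ y
      = (x ∘ Sum.inl) ⬝ᵥ A *ᵥ (y ∘ Sum.inl) + (x ∘ Sum.inr) ⬝ᵥ N *ᵥ (y ∘ Sum.inr) := by
  rw [Matrix.fromBlocks_mulVec]
  simp [dotProduct, Fintype.sum_sum_type]

lemma pair_submatrix {κ ι : Type*} [Fintype κ] [Fintype ι] (M : Matrix ι ι ℚ) (f : κ ≃ ι)
    (x y : κ → ℚ) :
    x ⬝ᵥ (M.submatrix f f) *ᵥ y = (x ∘ f.symm) ⬝ᵥ M *ᵥ (y ∘ f.symm) := by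
  simp only [dotProduct, Matrix.mulVec, Matrix.submatrix_apply]
  refine Fintype.sum_equiv f _ _ ?_
  intro i
  simp only [Function.comp_apply, Equiv.symm_apply_apply]
  congr 1
  refine Fintype.sum_equiv f _ _ ?_
  intro j
  simp

end NCproof

/-- precomposition with an equivalence, as a linear equivalence -/
def NCproof.prEquiv {α β : Type*} (e : α ≃ β) : (β → ℚ) ≃ₗ[ℚ] (α → ℚ) where
  toFun x := x ∘ e
  invFun y := y ∘ e.symm
  map_add' _ _ := rfl
  map_smul' _ _ := rfl
  left_inv x := by funext i; simp
  right_inv y := by funext i; simp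

/-- The block sum `A ⊞ B` of square matrices: the block-diagonal matrix `[[A,0],[0,B]]`. -/
def Matrix.blockSum {R : Type*} [CommRing R] {p q : ℕ}
    (A : Matrix (Fin p) (Fin p) R) (B : Matrix (Fin q) (Fin q) R) :
    Matrix (Fin (p + q)) (Fin (p + q)) R :=
  Matrix.reindex finSumFinEquiv finSumFinEquiv (Matrix.fromBlocks A 0 0 B)

/-- If `N` and `A ⊞ N` are rationally null-cobordant and some rational linear combination
`λN + μNᵀ` has nonzero determinant, then `A` is rationally null-cobordant. -/
theorem nullCobordant_of_blockSum_nullCobordant (a n : ℕ)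
    (A : Matrix (Fin (2 * a)) (Fin (2 * a)) ℚ)
    (N : Matrix (Fin (2 * n)) (Fin (2 * n)) ℚ)
    (hN : N.IsNullCobordant)
    (hAN : (A.blockSum N).IsNullCobordant)
    (hdet : ∃ lam mu : ℚ, (lam • N + mu • Nᵀ).det ≠ 0) :
    A.IsNullCobordant := by
  classical
  obtain ⟨lam, mu, hTdet⟩ := hdet
  obtain ⟨K, hKrank, hKiso⟩ := nc_to_subspace N hN rfl
  obtain ⟨H₀, hH₀rank, hH₀iso⟩ := nc_to_subspace (r := a + n) (A.blockSum N) hAN (by ring)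
  set Bm : Matrix (Fin (2*a) ⊕ Fin (2*n)) (Fin (2*a) ⊕ Fin (2*n)) ℚ
    := fromBlocks A 0 0 N with hBm
  let F := NCproof.prEquiv (finSumFinEquiv : Fin (2*a) ⊕ Fin (2*n) ≃ Fin (2*a + 2*n))
  have hpair : ∀ x y : Fin (2*a+2*n) → ℚ,
      x ⬝ᵥ (A.blockSum N) *ᵥ y = (F x) ⬝ᵥ Bm *ᵥ (F y) := by
    intro x y
    have h1 : A.blockSum N = Bm.submatrix (finSumFinEquiv.symm) (finSumFinEquiv.symm) := by
      rw [Matrix.blockSum, Matrix.reindex_apply, hBm]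
    rw [h1, NCproof.pair_submatrix]
    simp only [Equiv.symm_symm]
    rfl
  let H := H₀.map (F.toLinearMap)
  have hHrank : a + n ≤ finrank ℚ H := by
    rw [LinearEquiv.finrank_map_eq]; exact hH₀rank
  have hHiso : ∀ x ∈ H, ∀ y ∈ H, x ⬝ᵥ Bm *ᵥ y = 0 := by
    rintro x hx y hy
    obtain ⟨x₀, hx₀, rfl⟩ := hx
    obtain ⟨y₀, hy₀, rfl⟩ := hy
    rw [LinearEquiv.coe_coe, ← hpair x₀ y₀]
    exact hH₀iso x₀ hx₀ y₀ hy₀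
  let eV : (Fin (2*a) → ℚ) →ₗ[ℚ] (Fin (2*a) ⊕ Fin (2*n) → ℚ) := NCproof.extL
  let eW : (Fin (2*n) → ℚ) →ₗ[ℚ] (Fin (2*a) ⊕ Fin (2*n) → ℚ) := NCproof.extR
  let V' := Submodule.map eV (⊤ : Submodule ℚ (Fin (2*a) → ℚ))
  let K' := Submodule.map eW K
  let S := V' ⊔ K'
  let X := H ⊓ S
  let D := H ⊓ K'
  have hSmem : ∀ z ∈ S, ∃ v w, w ∈ K ∧ z = eV v + eW w := by
    intro z hz
    obtain ⟨zv, hzv, zw, hzw, rfl⟩ := Submodule.mem_sup.mp hz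
    obtain ⟨v, -, rfl⟩ := hzv
    obtain ⟨w, hw, rfl⟩ := hzw
    exact ⟨v, w, hw, rfl⟩
  have hcompL : ∀ (v : Fin (2*a) → ℚ) (w : Fin (2*n) → ℚ), (eV v + eW w) ∘ Sum.inl = v := by
    intro v w; funext i
    simp [eV, eW, NCproof.extL_apply, NCproof.extR_apply]
  have hcompR : ∀ (v : Fin (2*a) → ℚ) (w : Fin (2*n) → ℚ), (eV v + eW w) ∘ Sum.inr = w := by
    intro v w; funext i
    simp [eV, eW, NCproof.extL_apply, NCproof.extR_apply]
  set T : Matrix (Fin (2*n)) (Fin (2*n)) ℚ := lam • N + mu • Nᵀ with hTdef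
  let DW := D.comap eW
  have hDK' : D ≤ K' := inf_le_right
  have hmapDW : DW.map eW = D :=
    Submodule.map_comap_eq_self (le_trans hDK' LinearMap.map_le_range)
  have hDWD : finrank ℚ DW = finrank ℚ D := by
    rw [← hmapDW]
    exact (Submodule.equivMapOfInjective eW NCproof.extR_inj DW).finrank_eq
  set d := finrank ℚ DW with hd
  have hDWK : ∀ k ∈ DW, k ∈ K := by
    intro k hk
    have h1 : eW k ∈ K' := hDK' hk
    obtain ⟨k', hk', hkk⟩ := h1
    rwa [← NCproof.extR_inj hkk]
  let cB := finBasis ℚ DW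
  let cc : Fin d → (Fin (2*n) → ℚ) := fun i => (cB i : Fin (2*n) → ℚ)
  have hccDW : ∀ i, cc i ∈ DW := fun i => SetLike.coe_mem _
  have hccli : LinearIndependent ℚ cc := cB.linearIndependent.map' DW.subtype DW.ker_subtype
  have hTunit : IsUnit T := (Matrix.isUnit_iff_isUnit_det T).2 (isUnit_iff_ne_zero.2 hTdet)
  let u : Fin d → (Fin (2*a) ⊕ Fin (2*n) → ℚ) := fun i => eW (T *ᵥ cc i)
  have huli : LinearIndependent ℚ u := by
    have h2 : u = ⇑(eW ∘ₗ T.mulVecLin) ∘ cc := rfl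
    rw [h2]
    refine hccli.map' _ ?_
    rw [LinearMap.ker_eq_bot]
    intro x y hxy
    simp only [LinearMap.coe_comp, Function.comp_apply, Matrix.mulVecLin_apply] at hxy
    exact (Matrix.mulVec_injective_iff_isUnit.2 hTunit) (NCproof.extR_inj hxy)
  let Q : Matrix (Fin d) (Fin (2*a) ⊕ Fin (2*n)) ℚ := Matrix.of u
  have hQli : LinearIndependent ℚ Q := huli
  have hQrank : Q.rank = d := by rw [hQli.rank_matrix]; simp
  let G := Q.mulVecLin
  have hGrange : finrank ℚ (LinearMap.range G) = d := hQrank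
  have hGdim := LinearMap.finrank_range_add_finrank_ker G
  have hdom : finrank ℚ (Fin (2*a) ⊕ Fin (2*n) → ℚ) = 2*a + 2*n := by
    rw [Module.finrank_pi]; simp
  rw [hGrange, hdom] at hGdim
  have hBm_eW : ∀ (x : Fin (2*a) ⊕ Fin (2*n) → ℚ) (k : Fin (2*n) → ℚ),
      x ⬝ᵥ Bm *ᵥ (eW k) = (x ∘ Sum.inr) ⬝ᵥ N *ᵥ k := by
    intro x k
    rw [hBm, NCproof.pair_fromBlocks]
    have h3 : (eW k) ∘ Sum.inl = (0 : Fin (2*a) → ℚ) := rfl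
    have h4 : (eW k) ∘ Sum.inr = k := rfl
    rw [h3, h4]
    simp
  have hBm_eW' : ∀ (k : Fin (2*n) → ℚ) (x : Fin (2*a) ⊕ Fin (2*n) → ℚ),
      (eW k) ⬝ᵥ Bm *ᵥ x = k ⬝ᵥ N *ᵥ (x ∘ Sum.inr) := by
    intro k x
    rw [hBm, NCproof.pair_fromBlocks]
    have h3 : (eW k) ∘ Sum.inl = (0 : Fin (2*a) → ℚ) := rfl
    have h4 : (eW k) ∘ Sum.inr = k := rfl
    rw [h3, h4]
    simp
  have hud : ∀ (i : Fin d) (x : Fin (2*a) ⊕ Fin (2*n) → ℚ), u i ⬝ᵥ x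
      = lam * (x ⬝ᵥ Bm *ᵥ (eW (cc i))) + mu * ((eW (cc i)) ⬝ᵥ Bm *ᵥ x) := by
    intro i x
    rw [hBm_eW, hBm_eW']
    have h5 : u i ⬝ᵥ x = (T *ᵥ cc i) ⬝ᵥ (x ∘ Sum.inr) := NCproof.dot_extR _ _
    rw [h5, hTdef, Matrix.add_mulVec, Matrix.smul_mulVec, Matrix.smul_mulVec,
      add_dotProduct, smul_dotProduct, smul_dotProduct,
      smul_eq_mul, smul_eq_mul]
    congr 1
    · rw [dotProduct_comm]
    · congr 1
      rw [dotProduct_comm, Matrix.dotProduct_mulVec, Matrix.vecMul_transpose,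
        dotProduct_comm]
  have hDinH : ∀ i, eW (cc i) ∈ D := by
    intro i
    exact hmapDW ▸ Submodule.mem_map_of_mem (hccDW i)
  have hsub : H ⊔ S ≤ LinearMap.ker G := by
    refine sup_le ?_ ?_
    · intro x hx
      have h6 : ∀ i, u i ⬝ᵥ x = 0 := by
        intro i
        rw [hud]
        rw [hHiso x hx _ ((Submodule.mem_inf.mp (hDinH i)).1),
          hHiso _ ((Submodule.mem_inf.mp (hDinH i)).1) x hx]
        ring
      rw [LinearMap.mem_ker]
      funext i
      exact h6 i
    · intro x hx
      obtain ⟨v, w, hw, rfl⟩ := hSmem x hx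
      have h6 : ∀ i, u i ⬝ᵥ (eV v + eW w) = 0 := by
        intro i
        rw [hud, hBm_eW, hBm_eW', hcompR]
        rw [hKiso w hw _ (hDWK _ (hccDW i)), hKiso _ (hDWK _ (hccDW i)) w hw]
        ring
      rw [LinearMap.mem_ker]
      funext i
      exact h6 i
  have hVKbot : V' ⊓ K' = ⊥ := by
    rw [eq_bot_iff]
    rintro x hxm
    obtain ⟨hxV, hxK⟩ := Submodule.mem_inf.mp hxm
    obtain ⟨v, -, rfl⟩ := hxV
    obtain ⟨w, hw, hww⟩ := hxK
    have h0 : v = 0 := by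
      funext i
      have h9 := congrFun hww (Sum.inl i)
      simpa [NCproof.extL_apply, NCproof.extR_apply, eV, eW] using h9.symm
    simp [h0, map_zero]
  have hfrV' : finrank ℚ V' = 2*a := by
    have h10 := (Submodule.equivMapOfInjective eV NCproof.extL_inj ⊤).finrank_eq
    rw [← h10, finrank_top]
    simp
  have hfrK' : finrank ℚ K' = finrank ℚ K :=
    ((Submodule.equivMapOfInjective eW NCproof.extR_inj K).finrank_eq).symm
  have hfrS : finrank ℚ S = 2*a + finrank ℚ K := by
    have h5 := Submodule.finrank_sup_add_finrank_inf_eq V' K'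
    rw [hVKbot, finrank_bot, hfrV', hfrK'] at h5
    show finrank ℚ ↥(V' ⊔ K') = 2*a + finrank ℚ K
    omega
  have h6 : finrank ℚ ↥(H ⊔ S) ≤ finrank ℚ ↥(LinearMap.ker G) := Submodule.finrank_mono hsub
  have h7 := Submodule.finrank_sup_add_finrank_inf_eq H S
  have hXr : a + d ≤ finrank ℚ X := by
    have h8 : finrank ℚ X = finrank ℚ ↥(H ⊓ S) := rfl
    have hDd : finrank ℚ D = d := hDWD.symm
    omega
  let pV : (Fin (2*a) ⊕ Fin (2*n) → ℚ) →ₗ[ℚ] (Fin (2*a) → ℚ) := NCproof.prL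
  let Lsub := X.map pV
  have hrn2 := LinearMap.finrank_range_add_finrank_ker (pV.domRestrict X)
  have hrange2 : LinearMap.range (pV.domRestrict X) = Lsub := LinearMap.range_domRestrict X pV
  have hker2 : finrank ℚ ↥(LinearMap.ker (pV.domRestrict X)) ≤ finrank ℚ ↥D := by
    have hmem9 : ∀ z : LinearMap.ker (pV.domRestrict X),
        ((X.subtype ∘ₗ (LinearMap.ker (pV.domRestrict X)).subtype) z) ∈ D := by
      rintro ⟨⟨x, hxX⟩, hxk⟩
      obtain ⟨hxH, hxS⟩ := Submodule.mem_inf.mp hxX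
      have hx0 : pV x = 0 := by
        simpa [LinearMap.mem_ker, LinearMap.domRestrict_apply] using hxk
      refine Submodule.mem_inf.mpr ⟨hxH, ?_⟩
      obtain ⟨v, w, hw, hxe⟩ := hSmem x hxS
      subst hxe
      have hv0 : v = 0 := (hcompL v w).symm.trans hx0
      show eV v + eW w ∈ K'
      rw [hv0, map_zero, zero_add]
      exact Submodule.mem_map_of_mem hw
    let φ : LinearMap.ker (pV.domRestrict X) →ₗ[ℚ] D :=
      LinearMap.codRestrict D (X.subtype ∘ₗ (LinearMap.ker (pV.domRestrict X)).subtype) hmem9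
    have hφinj : Function.Injective φ := by
      intro z₁ z₂ hz
      have h11 := congrArg (Subtype.val) hz
      apply Subtype.ext
      apply Subtype.ext
      exact h11
    exact LinearMap.finrank_le_finrank_of_injective hφinj
  have hLrank : a ≤ finrank ℚ Lsub := by
    rw [hrange2] at hrn2
    have hDd : finrank ℚ D = d := hDWD.symm
    omega
  have hLiso : ∀ x ∈ Lsub, ∀ y ∈ Lsub, x ⬝ᵥ A *ᵥ y = 0 := by
    rintro x hx y hy
    obtain ⟨z, hz, rfl⟩ := hx
    obtain ⟨z', hz', rfl⟩ := hy
    obtain ⟨hzH, hzS⟩ := Submodule.mem_inf.mp hz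
    obtain ⟨hzH', hzS'⟩ := Submodule.mem_inf.mp hz'
    obtain ⟨v, w, hw, rfl⟩ := hSmem z hzS
    obtain ⟨v', w', hw', rfl⟩ := hSmem z' hzS'
    have h0 := hHiso _ hzH _ hzH'
    rw [hBm, NCproof.pair_fromBlocks, hcompL, hcompR, hcompL, hcompR] at h0
    rw [hKiso w hw w' hw', add_zero] at h0
    have hpv : pV (eV v + eW w) = v := hcompL v w
    have hpv' : pV (eV v' + eW w') = v' := hcompL v' w'
    rw [hpv, hpv']
    exact h0
  exact subspace_to_nc A rfl Lsub hLrank hLiso
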